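/- Let ξ be a Reeb field, φ ∈ psh(ξ), and v ∈ X_0. Then φ(v) ≥ φ(v_triv) − T(v;ξ), where v_triv ∈ X_0 is the trivial valuation (v_triv(f) = 0 for all f ∈ R∖{0}). In particular, φ(v) > −∞ whenever v is linearly bounded. -/

import Mathlib

open Filter Topology
open scoped Classical

noncomputable section

/-- A (real) semivaluation on `R` trivial on `k`, encoded as a function `R → ℝ ∪ {+∞} ⊆ EReal`. -/
def IsSemival (k : Type*) {R : Type*} [Field k] [CommRing R] [Algebra k R]
    (v : R → EReal) : Prop :=
  (∀ f, v f ≠ ⊥) ∧ (∀ f g, v (f * g) = v f + v g) ∧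
    (∀ f g, min (v f) (v g) ≤ v (f + g)) ∧ v 0 = ⊤ ∧
    ∀ c : k, c ≠ 0 → v (algebraMap k R c) = 0

/-- The pairing `⟨ξ, α⟩` between `ξ ∈ N_ℝ` and a weight `α ∈ M`. -/
def pairing {r : ℕ} (ξ : Fin r → ℝ) (α : Fin r → ℤ) : ℝ := ∑ i, ξ i * (α i : ℝ)

variable {k : Type*} [Field k] [IsAlgClosed k] [CharZero k]
variable {R : Type*} [CommRing R] [IsDomain R] [IsIntegrallyClosed R] [Algebra k R]
  [Algebra.FiniteType k R]
variable {r : ℕ} (𝒜 : (Fin r → ℤ) → Submodule k R) [GradedAlgebra 𝒜]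

/-- `ξ` is a Reeb field: `⟨ξ,α⟩ > 0` for all `α ∈ Λ ∖ {0}`. -/
def IsReeb (ξ : Fin r → ℝ) : Prop :=
  ∀ α : Fin r → ℤ, α ≠ 0 → 𝒜 α ≠ ⊥ → 0 < pairing ξ α

/-- The maximal ideal `𝔪` of the cone point. -/
def mIdeal : Ideal R := Ideal.span {f : R | ∃ α, α ≠ 0 ∧ f ∈ 𝒜 α}

/-- The semivaluation of the cone point `o`: `+∞` on `𝔪`, `0` elsewhere. -/
def oFun : R → EReal := fun f => if f ∈ mIdeal 𝒜 then (⊤ : EReal) else 0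

/-- The punctured Berkovich cone `X^an ∖ {o}`. -/
def XanP : Set (R → EReal) := {v | IsSemival k v ∧ v ≠ oFun 𝒜}

/-- The term `(log|f| + λ)/⟨ξ,α⟩` evaluated at `v`; recall `log|f|(v) = -v(f)`. -/
def fsTerm (ξ : Fin r → ℝ) (α : Fin r → ℤ) (f : R) (lam : ℝ) (v : R → EReal) : EReal :=
  (((pairing ξ α)⁻¹ : ℝ) : EReal) * (-(v f) + (lam : EReal))

/-- Fubini–Study functions with polarization `ξ`. -/
def IsFS (ξ : Fin r → ℝ) (φ : XanP 𝒜 → ℝ) : Prop :=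
  ∃ (N : ℕ) (f : Fin N → R) (α : Fin N → Fin r → ℤ) (lam : Fin N → ℝ),
    (∀ j, α j ≠ 0 ∧ f j ∈ 𝒜 (α j) ∧ f j ≠ 0) ∧
    (Ideal.span (Set.range f)).radical = mIdeal 𝒜 ∧
    ∀ v : XanP 𝒜, (φ v : EReal) = ⨆ j, fsTerm ξ (α j) (f j) (lam j) v.1

/-- Continuous `ξ`-psh functions: the closure of `H(ξ)` in `C⁰(X^an∖{o})` with the
topology of uniform convergence on compact subsets (compact-open topology). -/
def cpsh (ξ : Fin r → ℝ) : Set C(↥(XanP 𝒜), ℝ) := closure {φ | IsFS 𝒜 ξ ⇑φ}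

/-- `ξ`-psh functions: pointwise limits of decreasing nets of continuous `ξ`-psh
functions, not identically `-∞`, with values in `ℝ ∪ {-∞}`. -/
def IsPsh (ξ : Fin r → ℝ) (φ : XanP 𝒜 → EReal) : Prop :=
  (∀ v, φ v ≠ ⊤) ∧ (∃ v, φ v ≠ ⊥) ∧
  ∃ (ι : Type) (le : ι → ι → Prop),
    Nonempty ι ∧ (∀ i j : ι, ∃ l, le i l ∧ le j l) ∧
    ∃ φi : ι → C(↥(XanP 𝒜), ℝ),
      (∀ i, φi i ∈ cpsh 𝒜 ξ) ∧
      (∀ i j, le i j → ∀ v, φi j v ≤ φi i v) ∧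
      ∀ v, (⨅ i, ((φi i v : ℝ) : EReal)) = φ v

/-- The NA link `X₀ = {v : v(𝔪) = 0}`, as a subset of the punctured cone. -/
def linkSet : Set (↥(XanP 𝒜)) :=
  {v | (∀ f ∈ mIdeal 𝒜, f ≠ 0 → 0 ≤ v.1 f) ∧
    sInf {x : EReal | ∃ f ∈ mIdeal 𝒜, f ≠ 0 ∧ x = v.1 f} = 0}

/-- `T(v;ξ) = sup { v(f)/⟨ξ,α⟩ : α ∈ Λ∖{0}, f ∈ R_α ∖ {0} }`. -/
def Tfun (v : R → EReal) (ξ : Fin r → ℝ) : EReal :=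
  sSup {x : EReal | ∃ (α : Fin r → ℤ) (f : R), α ≠ 0 ∧ f ∈ 𝒜 α ∧ f ≠ 0 ∧
    x = (((pairing ξ α)⁻¹ : ℝ) : EReal) * v f}

end

set_option linter.unusedSectionVars false

namespace Statement9Aux

variable {k : Type*} [Field k] [IsAlgClosed k] [CharZero k]
variable {R : Type*} [CommRing R] [IsDomain R] [IsIntegrallyClosed R] [Algebra k R]
  [Algebra.FiniteType k R]
variable {r : ℕ} (𝒜 : (Fin r → ℤ) → Submodule k R) [GradedAlgebra 𝒜]

lemma aux_pairing_zero (ξ : Fin r → ℝ) : pairing ξ 0 = 0 := by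
  simp [pairing]

lemma aux_pairing_add (ξ : Fin r → ℝ) (a b : Fin r → ℤ) :
    pairing ξ (a + b) = pairing ξ a + pairing ξ b := by
  simp [pairing, Pi.add_apply, Int.cast_add, mul_add, Finset.sum_add_distrib]

lemma aux_degree_unique {g : R} (hg : g ≠ 0) {β β' : Fin r → ℤ}
    (h1 : g ∈ 𝒜 β) (h2 : g ∈ 𝒜 β') : β = β' := by
  by_contra hne
  have h3 := DirectSum.decompose_of_mem_ne 𝒜 h1 hne
  rw [DirectSum.decompose_of_mem_same 𝒜 h2] at h3
  exact hg h3

lemma aux_ne_bot {β : Fin r → ℤ} {g : R} (hg : g ∈ 𝒜 β) (hg0 : g ≠ 0) : 𝒜 β ≠ ⊥ :=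
  fun hb => hg0 (by simpa [hb] using hg)

lemma aux_exists_C_single (ξ : Fin r → ℝ) (hξ : IsReeb 𝒜 ξ)
    (h0 : 𝒜 0 = Submodule.span k {(1 : R)}) {w : R → EReal} (hw : IsSemival k w)
    {g : R} (hhom : ∃ β, g ∈ 𝒜 β) :
    ∃ C : ℝ, 0 ≤ C ∧ ∀ β, g ∈ 𝒜 β → ((-(C * pairing ξ β) : ℝ) : EReal) ≤ w g := by
  rcases eq_or_ne g 0 with rfl | hg
  · exact ⟨0, le_rfl, fun β _ => by rw [hw.2.2.2.1]; exact le_top⟩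
  obtain ⟨β₀, hβ₀⟩ := hhom
  rcases eq_or_ne β₀ 0 with rfl | hb0
  · have hsc : w g = 0 := by
      rw [h0] at hβ₀
      obtain ⟨c, hc⟩ := Submodule.mem_span_singleton.mp hβ₀
      have hgc : g = algebraMap k R c := by rw [← hc, Algebra.smul_def, mul_one]
      have hcne : c ≠ 0 := by rintro rfl; exact hg (by simp [hgc])
      rw [hgc]; exact hw.2.2.2.2 c hcne
    refine ⟨0, le_rfl, fun β hβ => ?_⟩
    have hβ0 : β = (0 : Fin r → ℤ) := aux_degree_unique 𝒜 hg hβ hβ₀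
    simp [hβ0, hsc, aux_pairing_zero]
  · rcases eq_or_ne (w g) ⊤ with htop | htop
    · exact ⟨0, le_rfl, fun β hβ => by rw [htop]; exact le_top⟩
    · have hp : 0 < pairing ξ β₀ := hξ β₀ hb0 (aux_ne_bot 𝒜 hβ₀ hg)
      refine ⟨max 0 ((-(w g).toReal) / pairing ξ β₀), le_max_left _ _, fun β hβ => ?_⟩
      have hββ : β = β₀ := aux_degree_unique 𝒜 hg hβ hβ₀
      refine le_trans (EReal.coe_le_coe_iff.mpr ?_) (le_of_eq (EReal.coe_toReal htop (hw.1 g)))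
      have h1 : (-(w g).toReal) / pairing ξ β₀
          ≤ max 0 ((-(w g).toReal) / pairing ξ β₀) := le_max_right _ _
      rw [div_le_iff₀ hp] at h1
      rw [hββ]
      linarith

lemma aux_mono (ξ : Fin r → ℝ) (hξ : IsReeb 𝒜 ξ) {w : R → EReal} (hw : IsSemival k w)
    {C D : ℝ} (hCD : C ≤ D) {g : R} {β : Fin r → ℤ} (hβ : g ∈ 𝒜 β)
    (h : ((-(C * pairing ξ β) : ℝ) : EReal) ≤ w g) :
    ((-(D * pairing ξ β) : ℝ) : EReal) ≤ w g := by
  rcases eq_or_ne g 0 with rfl | hg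
  · rw [hw.2.2.2.1]; exact le_top
  have hp : 0 ≤ pairing ξ β := by
    rcases eq_or_ne β 0 with rfl | hb
    · simp [aux_pairing_zero]
    · exact (hξ β hb (aux_ne_bot 𝒜 hβ hg)).le
  refine le_trans (EReal.coe_le_coe_iff.mpr ?_) h
  nlinarith

lemma aux_exists_C (ξ : Fin r → ℝ) (hξ : IsReeb 𝒜 ξ)
    (h0 : 𝒜 0 = Submodule.span k {(1 : R)}) {w : R → EReal} (hw : IsSemival k w)
    (t : Finset R) (hhom : ∀ g ∈ t, ∃ β, g ∈ 𝒜 β) :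
    ∃ C : ℝ, 0 ≤ C ∧ ∀ g ∈ t, ∀ β, g ∈ 𝒜 β →
      ((-(C * pairing ξ β) : ℝ) : EReal) ≤ w g := by
  classical
  revert hhom
  induction t using Finset.induction_on with
  | empty => intro _; exact ⟨0, le_rfl, by simp⟩
  | insert _ _ ha ih =>
    intro hhom
    obtain ⟨C1, hC1, hb1⟩ := ih (fun g hg => hhom g (Finset.mem_insert_of_mem hg))
    obtain ⟨C2, hC2, hb2⟩ := aux_exists_C_single 𝒜 ξ hξ h0 hw
      (hhom _ (Finset.mem_insert_self _ _))
    refine ⟨max C1 C2, le_trans hC1 (le_max_left _ _), fun g hg β hβ => ?_⟩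
    rcases Finset.mem_insert.mp hg with rfl | hg'
    · exact aux_mono 𝒜 ξ hξ hw (le_max_right _ _) hβ (hb2 β hβ)
    · exact aux_mono 𝒜 ξ hξ hw (le_max_left _ _) hβ (hb1 g hg' β hβ)

lemma aux_monomial (ξ : Fin r → ℝ) {w : R → EReal} (hw : IsSemival k w)
    {C : ℝ} (t : Finset R) (hhom : ∀ g ∈ t, ∃ β, g ∈ 𝒜 β)
    (hb : ∀ g ∈ t, ∀ β, g ∈ 𝒜 β → ((-(C * pairing ξ β) : ℝ) : EReal) ≤ w g)
    {m : R} (hm : m ∈ Submonoid.closure (↑t : Set R)) :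
    ∃ β, m ∈ 𝒜 β ∧ ((-(C * pairing ξ β) : ℝ) : EReal) ≤ w m := by
  induction hm using Submonoid.closure_induction with
  | mem g hg => obtain ⟨β, hβ⟩ := hhom g hg; exact ⟨β, hβ, hb g hg β hβ⟩
  | one =>
    refine ⟨0, SetLike.one_mem_graded 𝒜, ?_⟩
    have h1 : w 1 = 0 := by
      have h2 := hw.2.2.2.2 1 one_ne_zero; rwa [map_one] at h2
    simp [aux_pairing_zero, h1]
  | mul x y hx hy ihx ihy =>
    obtain ⟨β1, hβ1, ih1⟩ := ihx
    obtain ⟨β2, hβ2, ih2⟩ := ihy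
    refine ⟨β1 + β2, SetLike.mul_mem_graded hβ1 hβ2, ?_⟩
    rw [hw.2.1 x y, aux_pairing_add]
    have he : (-(C * (pairing ξ β1 + pairing ξ β2)) : ℝ)
        = (-(C * pairing ξ β1)) + (-(C * pairing ξ β2)) := by ring
    rw [he, EReal.coe_add]
    exact add_le_add ih1 ih2

lemma aux_span_bound (ξ : Fin r → ℝ) {w : R → EReal} (hw : IsSemival k w) {C : ℝ}
    (t : Finset R) (hadj : Algebra.adjoin k (↑t : Set R) = ⊤)
    (hmono : ∀ m ∈ Submonoid.closure (↑t : Set R),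
      ∃ β, m ∈ 𝒜 β ∧ ((-(C * pairing ξ β) : ℝ) : EReal) ≤ w m)
    (α : Fin r → ℤ) (f : R) (hf : f ∈ 𝒜 α) :
    ((-(C * pairing ξ α) : ℝ) : EReal) ≤ w f := by
  have hf1 : f ∈ Submodule.span k (↑(Submonoid.closure (↑t : Set R)) : Set R) := by
    rw [← Algebra.adjoin_eq_span, Subalgebra.mem_toSubmodule, hadj]
    exact Algebra.mem_top
  set π := GradedAlgebra.proj 𝒜 α with hπ
  have hπf : π f = f := by
    rw [hπ, GradedAlgebra.proj_apply, DirectSum.decompose_of_mem_same 𝒜 hf]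
  have h2 : f ∈ Submodule.span k (π '' (↑(Submonoid.closure (↑t : Set R)) : Set R)) := by
    rw [← hπf]; exact Submodule.apply_mem_span_image_of_mem_span π hf1
  have h3 : f ∈ Submodule.span k {m : R | m ∈ Submonoid.closure (↑t : Set R) ∧ m ∈ 𝒜 α} := by
    refine Submodule.span_le.mpr ?_ h2
    rintro y ⟨m, hm, rfl⟩
    obtain ⟨β, hβ, -⟩ := hmono m hm
    rcases eq_or_ne β α with rfl | hne
    · have hpm : π m = m := by
        rw [hπ, GradedAlgebra.proj_apply, DirectSum.decompose_of_mem_same 𝒜 hβ]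
      rw [hpm]; exact Submodule.subset_span ⟨hm, hβ⟩
    · have hpm : π m = 0 := by
        rw [hπ, GradedAlgebra.proj_apply, DirectSum.decompose_of_mem_ne 𝒜 hβ hne]
      rw [hpm]; exact Submodule.zero_mem _
  clear hf hπf h2 hf1
  induction h3 using Submodule.span_induction with
  | mem m hm =>
    obtain ⟨hmc, hmα⟩ := hm
    obtain ⟨β, hβ, hbd⟩ := hmono m hmc
    rcases eq_or_ne m 0 with rfl | hm0
    · rw [hw.2.2.2.1]; exact le_top
    · rw [aux_degree_unique 𝒜 hm0 hmα hβ]; exact hbd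
  | zero => rw [hw.2.2.2.1]; exact le_top
  | add x y hx hy ihx ihy => exact le_trans (le_min ihx ihy) (hw.2.2.1 x y)
  | smul c x hx ih =>
    rcases eq_or_ne c 0 with rfl | hc
    · rw [zero_smul, hw.2.2.2.1]; exact le_top
    · rw [Algebra.smul_def, hw.2.1, hw.2.2.2.2 c hc, zero_add]; exact ih

lemma aux_exists_bound (ξ : Fin r → ℝ) (hξ : IsReeb 𝒜 ξ)
    (h0 : 𝒜 0 = Submodule.span k {(1 : R)}) {w : R → EReal} (hw : IsSemival k w) :
    ∃ C : ℝ, 0 ≤ C ∧ ∀ (α : Fin r → ℤ) (f : R), f ∈ 𝒜 α →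
      ((-(C * pairing ξ α) : ℝ) : EReal) ≤ w f := by
  classical
  obtain ⟨s, hs⟩ := (inferInstance : Algebra.FiniteType k R).out
  set t : Finset R := s.biUnion (fun a =>
    (DirectSum.decompose 𝒜 a).support.image fun β => ((DirectSum.decompose 𝒜 a) β : R))
    with ht
  have hhom : ∀ g ∈ t, ∃ β, g ∈ 𝒜 β := by
    intro g hg
    rw [ht, Finset.mem_biUnion] at hg
    obtain ⟨a, -, hg⟩ := hg
    rw [Finset.mem_image] at hg
    obtain ⟨β, -, rfl⟩ := hg
    exact ⟨β, SetLike.coe_mem _⟩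
  have hadj : Algebra.adjoin k (↑t : Set R) = ⊤ := by
    rw [eq_top_iff, ← hs]
    apply Algebra.adjoin_le
    intro a ha
    rw [← DirectSum.sum_support_decompose 𝒜 a]
    apply Subalgebra.sum_mem
    intro β hβ
    apply Algebra.subset_adjoin
    rw [Finset.mem_coe, ht, Finset.mem_biUnion]
    exact ⟨a, ha, Finset.mem_image.mpr ⟨β, hβ, rfl⟩⟩
  obtain ⟨C, hC0, hC⟩ := aux_exists_C 𝒜 ξ hξ h0 hw t hhom
  exact ⟨C, hC0, fun α f hf =>
    aux_span_bound 𝒜 ξ hw t hadj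
      (fun m hm => aux_monomial 𝒜 ξ hw t hhom hC hm) α f hf⟩

lemma aux_fs_main (ξ : Fin r → ℝ) (hξ : IsReeb 𝒜 ξ) (v vtriv : ↥(XanP 𝒜))
    (hvt : ∀ f : R, f ≠ 0 → vtriv.1 f = 0)
    (ψ : ↥(XanP 𝒜) → ℝ) (hψ : IsFS 𝒜 ξ ψ) :
    (ψ vtriv : EReal) ≤ (ψ v : EReal) + Tfun 𝒜 v.1 ξ := by
  obtain ⟨N, f, α, lam, hj, -, hval⟩ := hψ
  rw [hval vtriv]
  refine iSup_le fun j => ?_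
  obtain ⟨hα, hmem, hne⟩ := hj j
  have hp : 0 < pairing ξ (α j) := hξ _ hα (aux_ne_bot 𝒜 hmem hne)
  have hterm : fsTerm ξ (α j) (f j) (lam j) vtriv.1
      = (((pairing ξ (α j))⁻¹ * lam j : ℝ) : EReal) := by
    simp only [fsTerm, hvt _ hne, neg_zero, zero_add, EReal.coe_mul]
  rw [hterm]
  have hTmem : (((pairing ξ (α j))⁻¹ : ℝ) : EReal) * v.1 (f j) ≤ Tfun 𝒜 v.1 ξ :=
    le_sSup ⟨α j, f j, hα, hmem, hne, rfl⟩
  have hbot : v.1 (f j) ≠ ⊥ := v.2.1.1 (f j)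
  rcases eq_or_ne (v.1 (f j)) ⊤ with htop | htop
  · have hTtop : Tfun 𝒜 v.1 ξ = ⊤ := by
      rw [htop, EReal.coe_mul_top_of_pos (inv_pos.mpr hp)] at hTmem
      exact top_le_iff.mp hTmem
    rw [hTtop, EReal.coe_add_top]
    exact le_top
  · have hx := EReal.coe_toReal htop hbot
    set x := (v.1 (f j)).toReal with hxdef
    have key : ((pairing ξ (α j))⁻¹ * lam j : ℝ)
        = ((pairing ξ (α j))⁻¹ * (-x + lam j)) + ((pairing ξ (α j))⁻¹ * x) := by ring
    rw [key, EReal.coe_add]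
    refine add_le_add ?_ ?_
    · have he : (((pairing ξ (α j))⁻¹ * (-x + lam j) : ℝ) : EReal)
          = fsTerm ξ (α j) (f j) (lam j) v.1 := by
        simp only [fsTerm, ← hx]; norm_cast
      calc (((pairing ξ (α j))⁻¹ * (-x + lam j) : ℝ) : EReal)
          = fsTerm ξ (α j) (f j) (lam j) v.1 := he
        _ ≤ ⨆ i, fsTerm ξ (α i) (f i) (lam i) v.1 := le_iSup (fun i => fsTerm ξ (α i) (f i) (lam i) v.1) j
        _ = (ψ v : EReal) := (hval v).symm
    · have he2 : (((pairing ξ (α j))⁻¹ * x : ℝ) : EReal)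
          = (((pairing ξ (α j))⁻¹ : ℝ) : EReal) * v.1 (f j) := by
        rw [← hx]; norm_cast
      rw [he2]; exact hTmem

lemma aux_fs_base (ξ : Fin r → ℝ) (hξ : IsReeb 𝒜 ξ) (w0 vtriv : ↥(XanP 𝒜))
    (hvt : ∀ f : R, f ≠ 0 → vtriv.1 f = 0) {C : ℝ}
    (hC : ∀ (α : Fin r → ℤ) (f : R), f ∈ 𝒜 α →
      ((-(C * pairing ξ α) : ℝ) : EReal) ≤ w0.1 f)
    (ψ : ↥(XanP 𝒜) → ℝ) (hψ : IsFS 𝒜 ξ ψ) :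
    (ψ w0 : EReal) ≤ (ψ vtriv : EReal) + (C : EReal) := by
  obtain ⟨N, f, α, lam, hj, -, hval⟩ := hψ
  rw [hval w0]
  refine iSup_le fun j => ?_
  obtain ⟨hα, hmem, hne⟩ := hj j
  have hp : 0 < pairing ξ (α j) := hξ _ hα (aux_ne_bot 𝒜 hmem hne)
  have hlam : (((pairing ξ (α j))⁻¹ * lam j : ℝ) : EReal) ≤ (ψ vtriv : EReal) := by
    have he : (((pairing ξ (α j))⁻¹ * lam j : ℝ) : EReal)
        = fsTerm ξ (α j) (f j) (lam j) vtriv.1 := by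
      simp only [fsTerm, hvt _ hne, neg_zero, zero_add, EReal.coe_mul]
    calc (((pairing ξ (α j))⁻¹ * lam j : ℝ) : EReal)
        = fsTerm ξ (α j) (f j) (lam j) vtriv.1 := he
      _ ≤ ⨆ i, fsTerm ξ (α i) (f i) (lam i) vtriv.1 := le_iSup (fun i => fsTerm ξ (α i) (f i) (lam i) vtriv.1) j
      _ = (ψ vtriv : EReal) := (hval vtriv).symm
  have hbot : w0.1 (f j) ≠ ⊥ := w0.2.1.1 (f j)
  rcases eq_or_ne (w0.1 (f j)) ⊤ with htop | htop
  · have hterm : fsTerm ξ (α j) (f j) (lam j) w0.1 = ⊥ := by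
      simp only [fsTerm, htop, EReal.neg_top, EReal.bot_add]
      exact EReal.coe_mul_bot_of_pos (inv_pos.mpr hp)
    rw [hterm]; exact bot_le
  · have hx := EReal.coe_toReal htop hbot
    set x := (w0.1 (f j)).toReal with hxdef
    have hxb : -x ≤ C * pairing ξ (α j) := by
      have h4 := hC (α j) (f j) hmem
      rw [← hx, EReal.coe_le_coe_iff] at h4
      linarith
    have he : fsTerm ξ (α j) (f j) (lam j) w0.1
        = (((pairing ξ (α j))⁻¹ * (-x + lam j) : ℝ) : EReal) := by
      simp only [fsTerm, ← hx]; norm_cast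
    rw [he]
    have h2 : (pairing ξ (α j))⁻¹ * (-x) ≤ C := by
      have h3 := mul_le_mul_of_nonneg_left hxb (inv_nonneg.mpr hp.le)
      rwa [mul_comm C, ← mul_assoc, inv_mul_cancel₀ hp.ne', one_mul] at h3
    have hr : (pairing ξ (α j))⁻¹ * (-x + lam j) ≤ (pairing ξ (α j))⁻¹ * lam j + C := by
      rw [mul_add]; linarith
    calc (((pairing ξ (α j))⁻¹ * (-x + lam j) : ℝ) : EReal)
        ≤ (((pairing ξ (α j))⁻¹ * lam j + C : ℝ) : EReal) := EReal.coe_le_coe_iff.mpr hr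
      _ = (((pairing ξ (α j))⁻¹ * lam j : ℝ) : EReal) + (C : EReal) := EReal.coe_add _ _
      _ ≤ (ψ vtriv : EReal) + (C : EReal) := add_le_add hlam le_rfl

lemma aux_cpsh (ξ : Fin r → ℝ) {x y : ↥(XanP 𝒜)} {c : EReal}
    (h : ∀ ψ : ↥(XanP 𝒜) → ℝ, IsFS 𝒜 ξ ψ → (ψ x : EReal) ≤ (ψ y : EReal) + c)
    {ψ : C(↥(XanP 𝒜), ℝ)} (hψ : ψ ∈ cpsh 𝒜 ξ) :
    ((ψ x : ℝ) : EReal) ≤ ((ψ y : ℝ) : EReal) + c := by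
  induction c with
  | bot =>
    exfalso
    have hemp : {φ : C(↥(XanP 𝒜), ℝ) | IsFS 𝒜 ξ ⇑φ} = (∅ : Set C(↥(XanP 𝒜), ℝ)) := by
      ext φ
      simp only [Set.mem_setOf_eq, Set.mem_empty_iff_false, iff_false]
      intro hφ
      have h2 := h ⇑φ hφ
      rw [EReal.add_bot] at h2
      exact EReal.coe_ne_bot _ (le_bot_iff.mp h2)
    rw [cpsh, hemp, closure_empty] at hψ
    exact hψ
  | coe t =>
    have hsub : {φ : C(↥(XanP 𝒜), ℝ) | IsFS 𝒜 ξ ⇑φ}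
        ⊆ {φ : C(↥(XanP 𝒜), ℝ) | φ x ≤ φ y + t} := by
      intro φ hφ
      have h2 := h ⇑φ hφ
      rw [← EReal.coe_add, EReal.coe_le_coe_iff] at h2
      exact h2
    have hcl : IsClosed {φ : C(↥(XanP 𝒜), ℝ) | φ x ≤ φ y + t} :=
      isClosed_le (continuous_eval_const x)
        ((continuous_eval_const y).add continuous_const)
    have h5 := closure_minimal hsub hcl hψ
    rw [← EReal.coe_add, EReal.coe_le_coe_iff]
    exact h5
  | top =>
    rw [EReal.coe_add_top]; exact le_top

end Statement9Aux


section Statements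

variable {k : Type*} [Field k] [IsAlgClosed k] [CharZero k]
variable {R : Type*} [CommRing R] [IsDomain R] [IsIntegrallyClosed R] [Algebra k R]
  [Algebra.FiniteType k R]
variable {r : ℕ} (𝒜 : (Fin r → ℤ) → Submodule k R) [GradedAlgebra 𝒜]

theorem statement9 (h0 : 𝒜 0 = Submodule.span k {(1 : R)}) (ξ : Fin r → ℝ)
    (hξ : IsReeb 𝒜 ξ) (φ : ↥(XanP 𝒜) → EReal) (hφ : IsPsh 𝒜 ξ φ)
    (v : ↥(XanP 𝒜)) (hv : v ∈ linkSet 𝒜)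
    -- `vtriv` is the trivial valuation: `v_triv(f) = 0` for all `f ≠ 0`
    (vtriv : ↥(XanP 𝒜)) (hvt : ∀ f : R, f ≠ 0 → vtriv.1 f = 0) :
    φ vtriv - Tfun 𝒜 v.1 ξ ≤ φ v ∧ (Tfun 𝒜 v.1 ξ < ⊤ → φ v ≠ ⊥) := by
  classical
  obtain ⟨hnotop, ⟨w0, hw0⟩, ι, lle, hnei, hdir, φi, hcpsh, hmon, hinf⟩ := hφ
  have hfs := fun (ψ : ↥(XanP 𝒜) → ℝ) hψ =>
    Statement9Aux.aux_fs_main 𝒜 ξ hξ v vtriv hvt ψ hψ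
  have hstep : ∀ i : ι, ((φi i vtriv : ℝ) : EReal)
      ≤ ((φi i v : ℝ) : EReal) + Tfun 𝒜 v.1 ξ :=
    fun i => Statement9Aux.aux_cpsh 𝒜 ξ hfs (hcpsh i)
  have part1 : φ vtriv - Tfun 𝒜 v.1 ξ ≤ φ v := by
    rw [← hinf v]
    refine le_iInf fun i => EReal.sub_le_of_le_add ?_
    calc φ vtriv = ⨅ i, ((φi i vtriv : ℝ) : EReal) := (hinf vtriv).symm
      _ ≤ ((φi i vtriv : ℝ) : EReal) := iInf_le _ i
      _ ≤ ((φi i v : ℝ) : EReal) + Tfun 𝒜 v.1 ξ := hstep i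
  refine ⟨part1, fun hTlt hbotv => ?_⟩
  obtain ⟨C, hC0, hC⟩ := Statement9Aux.aux_exists_bound 𝒜 ξ hξ h0 w0.2.1
  have hfs2 := fun (ψ : ↥(XanP 𝒜) → ℝ) hψ =>
    Statement9Aux.aux_fs_base 𝒜 ξ hξ w0 vtriv hvt hC ψ hψ
  have hstep2 : ∀ i : ι, ((φi i w0 : ℝ) : EReal)
      ≤ ((φi i vtriv : ℝ) : EReal) + (C : EReal) :=
    fun i => Statement9Aux.aux_cpsh 𝒜 ξ hfs2 (hcpsh i)
  have h2 : φ w0 - (C : EReal) ≤ φ vtriv := by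
    rw [← hinf vtriv]
    refine le_iInf fun i => EReal.sub_le_of_le_add ?_
    calc φ w0 = ⨅ i, ((φi i w0 : ℝ) : EReal) := (hinf w0).symm
      _ ≤ ((φi i w0 : ℝ) : EReal) := iInf_le _ i
      _ ≤ ((φi i vtriv : ℝ) : EReal) + (C : EReal) := hstep2 i
  have hvtbot : φ vtriv ≠ ⊥ := by
    intro hb
    rw [hb, le_bot_iff, sub_eq_add_neg] at h2
    rcases EReal.add_eq_bot_iff.mp h2 with h | h
    · exact hw0 h
    · rw [← EReal.coe_neg] at h
      exact EReal.coe_ne_bot _ h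
  rw [hbotv, le_bot_iff, sub_eq_add_neg] at part1
  rcases EReal.add_eq_bot_iff.mp part1 with h | h
  · exact hvtbot h
  · have h6 := congrArg Neg.neg h
    rw [neg_neg, EReal.neg_bot] at h6
    exact hTlt.ne h6


end Statements
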